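/- If 0 < a, b < 1 and a³b³ − 2a²b² − (a² + b²) + 3ab = 0, then the chord joining any two distinct unit-circle preimages z_1, z_2 of a common value λ (|λ|=1) under B(z) = z·(z²−a)/(1−az²)·(z²−b)/(1−bz²) is tangent to the union of the two ellipses (4b/(a(b+1)²))x² + (4b/(a(b−1)²))y² = 1 and (4a/(b(a+1)²))x² + (4a/(b(a−1)²))y² = 1 (with z = x + iy). -/

import Mathlib

open Complex

lemma tangent_aux (a b : ℝ) (ha : 0 < a) (hb : 0 < b) (hb' : b < 1)
    (z₁ z₂ : ℂ) (hz₁ : ‖z₁‖ = 1) (hz₂ : ‖z₂‖ = 1)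
    (hT : (a : ℂ) * (z₁ * z₂ + b) * (b * (z₁ * z₂) + 1) = b * (z₁ + z₂) ^ 2) :
    ∃! w : ℂ, (w + z₁ * z₂ * (starRingEnd ℂ) w = z₁ + z₂) ∧
      (4 * b / (a * (b + 1) ^ 2)) * w.re ^ 2 + (4 * b / (a * (b - 1) ^ 2)) * w.im ^ 2 = 1 := by
  set c : ℂ := z₁ * z₂ with hc
  set s : ℂ := z₁ + z₂ with hs
  have ha0 : (a : ℂ) ≠ 0 := by exact_mod_cast ha.ne'
  have hb0 : (b : ℂ) ≠ 0 := by exact_mod_cast hb.ne'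
  have hbp : ((b : ℂ) + 1) ≠ 0 := by
    have : ((b + 1 : ℝ) : ℂ) ≠ 0 := Complex.ofReal_ne_zero.2 (by linarith)
    push_cast at this; exact this
  have hbm : ((b : ℂ) - 1) ≠ 0 := by
    have : ((b - 1 : ℝ) : ℂ) ≠ 0 := Complex.ofReal_ne_zero.2 (by linarith)
    push_cast at this; exact this
  have habsc : ‖c‖ = 1 := by rw [hc, norm_mul, hz₁, hz₂, one_mul]
  have hc0 : c ≠ 0 := by
    intro h; rw [h] at habsc; simp at habsc
  have hccj : c * (starRingEnd ℂ) c = 1 := by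
    rw [Complex.mul_conj, Complex.normSq_eq_norm_sq, habsc]; norm_num
  have hz1cj : z₁ * (starRingEnd ℂ) z₁ = 1 := by
    rw [Complex.mul_conj, Complex.normSq_eq_norm_sq, hz₁]; norm_num
  have hz2cj : z₂ * (starRingEnd ℂ) z₂ = 1 := by
    rw [Complex.mul_conj, Complex.normSq_eq_norm_sq, hz₂]; norm_num
  have hcs : c * (starRingEnd ℂ) s = s := by
    rw [hc, hs, map_add]
    linear_combination z₂ * hz1cj + z₁ * hz2cj
  have hcb : c + (b : ℂ) ≠ 0 := by
    intro h
    have hcate : c = -(b : ℂ) := by linear_combination h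
    rw [hcate] at habsc
    simp [abs_of_pos hb] at habsc
    linarith
  have hbc : (b : ℂ) * c + 1 ≠ 0 := by
    intro h
    have hcate : (b : ℂ) * c = -1 := by linear_combination h
    apply_fun (‖·‖) at hcate
    rw [norm_mul, habsc, mul_one, Complex.norm_real, Real.norm_eq_abs, abs_of_pos hb] at hcate
    simp at hcate
    linarith
  have hs0 : s ≠ 0 := by
    intro h
    rw [h] at hT
    have : (a : ℂ) * (c + b) * (b * c + 1) = 0 := by linear_combination hT
    exact (mul_ne_zero (mul_ne_zero ha0 hcb) hbc) this
  have hicc : (starRingEnd ℂ) c = c⁻¹ := (inv_eq_of_mul_eq_one_right hccj).symm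
  have hics : (starRingEnd ℂ) s = s / c := by rw [eq_div_iff hc0]; linear_combination hcs
  have hden : (2:ℂ) * b * s ≠ 0 := mul_ne_zero (mul_ne_zero two_ne_zero hb0) hs0
  set w₀ : ℂ := (a:ℂ) * (((b:ℂ)^2 + 1) * c + 2 * b) / (2 * b * s) with hw₀
  have hconjw₀ : (starRingEnd ℂ) w₀ = (a:ℂ) * (((b:ℂ)^2 + 1) + 2 * b * c) / (2 * b * s) := by
    rw [hw₀, map_div₀]
    simp only [map_mul, map_add, map_pow, map_one, map_ofNat, Complex.conj_ofReal, hicc, hics]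
    rw [div_eq_div_iff (mul_ne_zero (mul_ne_zero two_ne_zero hb0) (div_ne_zero hs0 hc0)) hden]
    field_simp
  -- membership
  have hmem : w₀ + c * (starRingEnd ℂ) w₀ = s := by
    rw [hconjw₀, hw₀]
    field_simp
    linear_combination 2 * hT
  -- sums / differences
  have hre : 4 * (b:ℂ) * s * (w₀.re : ℂ) = a * (c + 1) * ((b:ℂ) + 1)^2 := by
    have h2 : (w₀ + (starRingEnd ℂ) w₀) * (2 * b * s) = a * (c + 1) * ((b:ℂ) + 1)^2 := by
      rw [hconjw₀, hw₀]
      field_simp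
      ring
    rw [Complex.add_conj] at h2
    push_cast at h2
    linear_combination h2
  have him : 4 * (b:ℂ) * s * (w₀.im : ℂ) * I = a * (c - 1) * ((b:ℂ) - 1)^2 := by
    have h2 : (w₀ - (starRingEnd ℂ) w₀) * (2 * b * s) = a * (c - 1) * ((b:ℂ) - 1)^2 := by
      rw [hconjw₀, hw₀]
      field_simp
      ring
    rw [Complex.sub_conj] at h2
    push_cast at h2
    linear_combination h2
  -- complex cleared ellipse at w₀
  have hC₀ : 4 * (b:ℂ) * ((b:ℂ) - 1)^2 * (w₀.re:ℂ)^2 + 4 * b * ((b:ℂ)+1)^2 * (w₀.im:ℂ)^2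
      = a * ((b:ℂ)+1)^2 * ((b:ℂ)-1)^2 := by
    have h16 : (16:ℂ) * b^2 * s^2 ≠ 0 := by
      apply mul_ne_zero (mul_ne_zero (by norm_num) (pow_ne_zero 2 hb0)) (pow_ne_zero 2 hs0)
    apply mul_left_cancel₀ h16
    linear_combination (4*(b:ℂ)*((b:ℂ)-1)^2*(4*b*s*(w₀.re:ℂ) + a*(c+1)*((b:ℂ)+1)^2)) * hre
      - (4*(b:ℂ)*((b:ℂ)+1)^2*(4*b*s*(w₀.im:ℂ)*I + a*(c-1)*((b:ℂ)-1)^2)) * him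
      + (64*(b:ℂ)^3*((b:ℂ)+1)^2*s^2*(w₀.im:ℂ)^2) * Complex.I_sq
      + (16*(a:ℂ)*b*((b:ℂ)+1)^2*((b:ℂ)-1)^2) * hT
  have hCr : 4 * b * (b-1)^2 * w₀.re^2 + 4 * b * (b+1)^2 * w₀.im^2 = a * (b+1)^2 * (b-1)^2 := by
    exact_mod_cast hC₀
  have hEll : (4 * b / (a * (b + 1) ^ 2)) * w₀.re ^ 2 + (4 * b / (a * (b - 1) ^ 2)) * w₀.im ^ 2 = 1 := by
    have hap : a * (b+1)^2 ≠ 0 := by positivity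
    have ham : a * (b-1)^2 ≠ 0 := by
      have : b - 1 ≠ 0 := by linarith
      positivity
    rw [div_mul_eq_mul_div, div_mul_eq_mul_div, div_add_div _ _ hap ham, div_eq_one_iff_eq (mul_ne_zero hap ham)]
    linear_combination a * hCr
  refine ⟨w₀, ⟨hmem, hEll⟩, ?_⟩
  rintro w ⟨hwL, hwE⟩
  have hadd : w + (starRingEnd ℂ) w = 2 * (w.re : ℂ) := by
    rw [Complex.add_conj]; push_cast; ring
  have hsub : w - (starRingEnd ℂ) w = 2 * (w.im : ℂ) * I := by
    rw [Complex.sub_conj]; push_cast; ring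
  have hu1 : c * w + s - w = 2 * c * (w.re:ℂ) := by linear_combination c * hadd - hwL
  have hu2 : c * w + w - s = 2 * c * (w.im:ℂ) * I := by linear_combination c * hsub + hwL
  have hEr : 4*b*(b-1)^2*w.re^2 + 4*b*(b+1)^2*w.im^2 = a*(b+1)^2*(b-1)^2 := by
    have hap : a * (b+1)^2 ≠ 0 := by positivity
    have ham : a * (b-1)^2 ≠ 0 := by
      have : b - 1 ≠ 0 := by linarith
      positivity
    rw [div_mul_eq_mul_div, div_mul_eq_mul_div, div_add_div _ _ hap ham, div_eq_one_iff_eq (mul_ne_zero hap ham)] at hwE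
    refine mul_left_cancel₀ (show (a:ℝ) ≠ 0 from ha.ne') ?_
    linear_combination hwE
  have hEC : 4*(b:ℂ)*((b:ℂ)-1)^2*(w.re:ℂ)^2 + 4*(b:ℂ)*((b:ℂ)+1)^2*(w.im:ℂ)^2
      = (a:ℂ)*((b:ℂ)+1)^2*((b:ℂ)-1)^2 := by exact_mod_cast hEr
  have hE4 : (b:ℂ)*((b:ℂ)-1)^2*(c*w+s-w)^2 - b*((b:ℂ)+1)^2*(c*w+w-s)^2
      = a*((b:ℂ)+1)^2*((b:ℂ)-1)^2*c^2 := by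
    linear_combination (b*((b:ℂ)-1)^2*(c*w+s-w+2*c*(w.re:ℂ)))*hu1
      - (b*((b:ℂ)+1)^2*(c*w+w-s+2*c*(w.im:ℂ)*I))*hu2
      + c^2*hEC - 4*(b:ℂ)*((b:ℂ)+1)^2*c^2*(w.im:ℂ)^2*Complex.I_sq
  have key : ((b:ℂ)+c)*(b*c+1)*(2*b*s*w - a*(((b:ℂ)^2+1)*c+2*b))^2 = 0 := by
    linear_combination (-(b:ℂ)*s^2) * hE4
      + ((a:ℂ)*(((b:ℂ)^2+1)*c+2*b)^2 - 4*b*s*w*(((b:ℂ)^2+1)*c+2*b) + 4*(b:ℂ)^2*s^2) * hT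
  have h9 : (2*(b:ℂ)*s*w - a*(((b:ℂ)^2+1)*c+2*b))^2 = 0 := by
    rcases mul_eq_zero.mp key with h | h
    · rcases mul_eq_zero.mp h with h' | h'
      · exact absurd (by linear_combination h' : c + (b:ℂ) = 0) hcb
      · exact absurd h' hbc
    · exact h
  have h10 : 2*(b:ℂ)*s*w = a*(((b:ℂ)^2+1)*c+2*b) := by
    have h11 := pow_eq_zero_iff (n := 2) (by norm_num) |>.mp h9
    linear_combination h11
  rw [hw₀, eq_div_iff hden]
  linear_combination h10

theorem interior_curve_two_ellipses (a b : ℝ)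
    (ha : 0 < a) (ha' : a < 1) (hb : 0 < b) (hb' : b < 1)
    (hab : a ^ 3 * b ^ 3 - 2 * a ^ 2 * b ^ 2 - (a ^ 2 + b ^ 2) + 3 * a * b = 0)
    (B : ℂ → ℂ)
    (hB : ∀ z, B z = z * ((z ^ 2 - (a : ℂ)) / (1 - (a : ℂ) * z ^ 2)) *
      ((z ^ 2 - (b : ℂ)) / (1 - (b : ℂ) * z ^ 2)))
    (lam : ℂ) (hlam : ‖lam‖ = 1)
    (z₁ z₂ : ℂ) (hz₁ : ‖z₁‖ = 1) (hz₂ : ‖z₂‖ = 1)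
    (hne : z₁ ≠ z₂) (h₁ : B z₁ = lam) (h₂ : B z₂ = lam)
    (L : Set ℂ) (hL : L = {z : ℂ | z + z₁ * z₂ * (starRingEnd ℂ) z = z₁ + z₂}) :
    (∃! w : ℂ, w ∈ L ∧
        (4 * b / (a * (b + 1) ^ 2)) * w.re ^ 2 +
          (4 * b / (a * (b - 1) ^ 2)) * w.im ^ 2 = 1) ∨
    (∃! w : ℂ, w ∈ L ∧
        (4 * a / (b * (a + 1) ^ 2)) * w.re ^ 2 +
          (4 * a / (b * (a - 1) ^ 2)) * w.im ^ 2 = 1) := by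
  have hden : ∀ (r : ℝ), 0 < r → r < 1 → ∀ z : ℂ, ‖z‖ = 1 →
      (1 : ℂ) - (r : ℂ) * z ^ 2 ≠ 0 := by
    intro r hr hr' z hz h
    have h1 : (r : ℂ) * z ^ 2 = 1 := by linear_combination -h
    apply_fun (‖·‖) at h1
    rw [norm_mul, norm_pow, hz, Complex.norm_real, Real.norm_eq_abs, abs_of_pos hr] at h1
    simp at h1
    linarith
  have hd1 := hden a ha ha' z₁ hz₁
  have hd2 := hden b hb hb' z₁ hz₁
  have hd3 := hden a ha ha' z₂ hz₂
  have hd4 := hden b hb hb' z₂ hz₂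
  have hEq : B z₁ = B z₂ := h₁.trans h₂.symm
  rw [hB, hB] at hEq
  rw [mul_assoc, mul_assoc, div_mul_div_comm, div_mul_div_comm, ← mul_div_assoc, ← mul_div_assoc,
    div_eq_div_iff (mul_ne_zero hd1 hd2) (mul_ne_zero hd3 hd4)] at hEq
  have hH : (a:ℂ)^3*(b:ℂ)^3 - 2*(a:ℂ)^2*(b:ℂ)^2 - ((a:ℂ)^2+(b:ℂ)^2) + 3*(a:ℂ)*(b:ℂ) = 0 := by
    have h0 : ((a ^ 3 * b ^ 3 - 2 * a ^ 2 * b ^ 2 - (a ^ 2 + b ^ 2) + 3 * a * b : ℝ) : ℂ) = 0 := by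
      rw [hab]; norm_num
    push_cast at h0
    linear_combination h0
  have key5 : (z₁ - z₂) * ((((a:ℂ)*(z₁*z₂+b)*(b*(z₁*z₂)+1) - b*(z₁+z₂)^2)) *
      (((b:ℂ)*(z₁*z₂+a)*(a*(z₁*z₂)+1) - a*(z₁+z₂)^2))) = 0 := by
    linear_combination ((a:ℂ)*b) * hEq + (z₁-z₂)*z₁*z₂*(z₁+z₂)^2 * hH
  have hfac := (mul_eq_zero.mp key5).resolve_left (sub_ne_zero.2 hne)
  rcases mul_eq_zero.mp hfac with h | h
  · left
    rw [hL]
    simpa [Set.mem_setOf_eq] using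
      tangent_aux a b ha hb hb' z₁ z₂ hz₁ hz₂ (sub_eq_zero.mp h)
  · right
    rw [hL]
    simpa [Set.mem_setOf_eq] using
      tangent_aux b a hb ha ha' z₁ z₂ hz₁ hz₂ (sub_eq_zero.mp h)
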